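/- Let H be a complex Hilbert space and let B, R be bounded positive operators on H with R ≥ 1 (i.e. R - 1 is positive). If B R B = R, then B = 1. -/

import Mathlib

set_option synthInstance.maxHeartbeats 1000000
set_option maxHeartbeats 2000000

/-- If `B, R` are bounded positive operators on a complex Hilbert space with `R ≥ 1`
(i.e. `R - 1` is positive) and `B R B = R`, then `B = 1`. -/
theorem stmt0 {H : Type*} [NormedAddCommGroup H] [InnerProductSpace ℂ H] [CompleteSpace H]
    (B R : H →L[ℂ] H) (hB : B.IsPositive) (hR : R.IsPositive)
    (hR1 : (R - 1).IsPositive) (h : B ∘L R ∘L B = R) : B = 1 := by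
  rw [← ContinuousLinearMap.nonneg_iff_isPositive] at hB hR hR1
  have hR1' : (1 : H →L[ℂ] H) ≤ R := sub_nonneg.mp hR1
  have h' : B * R * B = R := by rw [mul_assoc]; exact h
  have hRu : IsUnit R := CStarAlgebra.isUnit_of_le 1 hR1'
  set s := CFC.sqrt R with hs_def
  have hs : 0 ≤ s := CFC.sqrt_nonneg (a := R)
  have hs2 : s ^ 2 = R := CFC.sq_sqrt R hR
  have hssa : IsSelfAdjoint s := hs.isSelfAdjoint
  have hsBs : 0 ≤ s * B * s := hssa.conjugate_nonneg hB
  have hkey : (s * B * s) ^ 2 = R ^ 2 := by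
    have e1 : (s * B * s) ^ 2 = s * (B * (s * s) * B) * s := by noncomm_ring
    have e2 : s * s = R := by rw [← sq, hs2]
    rw [e1, e2]
    calc s * (B * R * B) * s = s * R * s := by rw [h']
    _ = s * (s * s) * s := by rw [e2]
    _ = (s * s) * (s * s) := by noncomm_ring
    _ = R ^ 2 := by rw [e2, sq]
  have heq : s * B * s = R := by
    have h1 : CFC.sqrt ((s * B * s) ^ 2) = s * B * s := CFC.sqrt_sq _ hsBs
    have h2 : CFC.sqrt (R ^ 2) = R := CFC.sqrt_sq _ hR
    rw [← h1, hkey, h2]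
  have hsu : IsUnit s := by
    obtain ⟨u, hu⟩ := hRu
    have e2 : s * s = R := by rw [← sq, hs2]
    have l1 : s * (s * ↑u⁻¹) = 1 := by
      rw [← mul_assoc, e2, ← hu, Units.mul_inv]
    have l2 : (↑u⁻¹ * s) * s = 1 := by
      rw [mul_assoc, e2, ← hu, Units.inv_mul]
    have hbc : s * ↑u⁻¹ = (↑u⁻¹ * s : H →L[ℂ] H) := by
      calc (s * ↑u⁻¹ : H →L[ℂ] H) = ((↑u⁻¹ * s) * s) * (s * ↑u⁻¹) := by rw [l2, one_mul]
      _ = (↑u⁻¹ * s) * (s * (s * ↑u⁻¹)) := by noncomm_ring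
      _ = ↑u⁻¹ * s := by rw [l1, mul_one]
    exact ⟨⟨s, s * ↑u⁻¹, l1, by rw [hbc]; exact l2⟩, rfl⟩
  have heq2 : s * (B * s) = s * (1 * s) := by
    rw [one_mul, ← mul_assoc, heq, ← sq, hs2]
  have heq3 : B * s = 1 * s := hsu.mul_left_cancel heq2
  exact hsu.mul_right_cancel heq3
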